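/- Let Ŷ ∈ R^{n×k} have full column rank, let ŷ_i be its columns, and suppose the Gram matrix G = Ŷ^T Ŷ has all entries nonnegative (doubly nonnegative). Let v(s) = (⟨ŷ_1,s⟩², …, ⟨ŷ_k,s⟩²) for unit vectors s ∈ span(ŷ_1,…,ŷ_k). Then for every such s there exists a unit vector s' in the dual cone of cone(ŷ_1,…,ŷ_k) with ⟨ŷ_i, s'⟩ ≥ |⟨ŷ_i, s⟩| for all i; consequently every Pareto optimal point of the feasible region { v(s) : ‖s‖=1, s ∈ span(ŷ_i) } (for the maximization of all coordinates) lies on the single surface { v ≥ 0 : (√v)^T G^{-1} (√v) = 1 }. -/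

import Mathlib

open Matrix

/-- 'If' direction of Lemma 3.4 (condition C1): if the Gram matrix of the linearly
independent vectors `ŷ_i` is doubly nonnegative, then (i) every unit `s ∈ span(ŷ_i)`
admits a unit vector `s'` in the dual cone of `cone(ŷ_i)` with
`⟨ŷ_i, s'⟩ ≥ |⟨ŷ_i, s⟩|` for all `i`; consequently (ii) every Pareto optimal point of
the feasible region `F = { (⟨ŷ_i, s⟩²)_i : ‖s‖ = 1, s ∈ span(ŷ_i) }` (for coordinatewise
maximization) lies on the single surface `{ v ≥ 0 : (√v)ᵀ G⁻¹ (√v) = 1 }`. -/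
theorem stmt_18 {n k : ℕ} (yhat : Fin k → EuclideanSpace ℝ (Fin n))
    (hli : LinearIndependent ℝ yhat)
    (hG : ∀ i j, 0 ≤ (inner ℝ (yhat i) (yhat j) : ℝ))
    (F : Set (Fin k → ℝ))
    (hF : F = {v : Fin k → ℝ | ∃ s : EuclideanSpace ℝ (Fin n),
      s ∈ Submodule.span ℝ (Set.range yhat) ∧ ‖s‖ = 1 ∧
      ∀ i, v i = (inner ℝ (yhat i) s : ℝ) ^ 2}) :
    (∀ s : EuclideanSpace ℝ (Fin n), s ∈ Submodule.span ℝ (Set.range yhat) →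
      ‖s‖ = 1 →
      ∃ s' : EuclideanSpace ℝ (Fin n), ‖s'‖ = 1 ∧
        (∀ x : EuclideanSpace ℝ (Fin n),
          (∃ α : Fin k → ℝ, (∀ i, 0 ≤ α i) ∧ x = ∑ i, α i • yhat i) →
          0 ≤ (inner ℝ s' x : ℝ)) ∧
        ∀ i, |(inner ℝ (yhat i) s : ℝ)| ≤ (inner ℝ (yhat i) s' : ℝ)) ∧
    (∀ v ∈ F, (¬ ∃ v' ∈ F, (∀ i, v i ≤ v' i) ∧ v' ≠ v) →
      (∀ i, 0 ≤ v i) ∧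
      (fun i => Real.sqrt (v i)) ⬝ᵥ
        ((Matrix.of fun i j => (inner ℝ (yhat i) (yhat j) : ℝ))⁻¹).mulVec
          (fun i => Real.sqrt (v i)) = 1) := by
  have part1 : ∀ s : EuclideanSpace ℝ (Fin n), s ∈ Submodule.span ℝ (Set.range yhat) →
      ‖s‖ = 1 →
      ∃ s' : EuclideanSpace ℝ (Fin n), ‖s'‖ = 1 ∧
        (∀ x : EuclideanSpace ℝ (Fin n),
          (∃ α : Fin k → ℝ, (∀ i, 0 ≤ α i) ∧ x = ∑ i, α i • yhat i) →
          0 ≤ (inner ℝ s' x : ℝ)) ∧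
        ∀ i, |(inner ℝ (yhat i) s : ℝ)| ≤ (inner ℝ (yhat i) s' : ℝ) := by
    intro s _ hs
    set K : Set (EuclideanSpace ℝ (Fin n)) := {y | ∀ i, 0 ≤ (inner ℝ (yhat i) y : ℝ)} with hK
    have h0K : (0 : EuclideanSpace ℝ (Fin n)) ∈ K := fun i => by simp
    have hconv : Convex ℝ K := by
      intro y hy z hz a b ha hb hab i
      rw [inner_add_right, real_inner_smul_right, real_inner_smul_right]
      have := hy i; have := hz i
      positivity
    have hclosed : IsClosed K := by
      have : K = ⋂ i, {y : EuclideanSpace ℝ (Fin n) | 0 ≤ (inner ℝ (yhat i) y : ℝ)} := by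
        ext y; simp [hK]
      rw [this]
      exact isClosed_iInter fun i =>
        isClosed_le continuous_const (continuous_const.inner continuous_id)
    obtain ⟨p, hpK, hmin⟩ :=
      exists_norm_eq_iInf_of_complete_convex ⟨0, h0K⟩ hclosed.isComplete hconv s
    have hvar : ∀ w ∈ K, (inner ℝ (s - p) (w - p) : ℝ) ≤ 0 :=
      (norm_eq_iInf_iff_real_inner_le_zero hconv hpK).1 hmin
    have hpadd : ∀ w ∈ K, (inner ℝ (s - p) w : ℝ) ≤ 0 := by
      intro w hw
      have hwp : w + p ∈ K := fun i => by
        rw [inner_add_right]; have := hw i; have := hpK i; linarith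
      have := hvar _ hwp
      simpa using this
    have h0 : (inner ℝ (s - p) p : ℝ) = 0 := by
      have h1 := hvar 0 h0K
      have h2 := hpadd p hpK
      rw [zero_sub, inner_neg_right] at h1
      linarith
    refine ⟨(2:ℝ) • p - s, ?_, ?_, ?_⟩
    · have hsq : ‖(2:ℝ) • p - s‖ ^ 2 = ‖s‖ ^ 2 := by
        have e1 : ((2:ℝ) • p - s) = p - (s - p) := by module
        rw [e1, norm_sub_sq_real]
        have e2 : (inner ℝ p (s - p) : ℝ) = 0 := by
          rw [real_inner_comm]; exact h0
        have e3 : ‖s‖^2 = ‖(s - p) + p‖^2 := by norm_num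
        rw [e3, norm_add_sq_real, real_inner_comm] at *
        linarith
      rw [hs] at hsq
      nlinarith [norm_nonneg ((2:ℝ) • p - s)]
    · intro x ⟨α, hα, hx⟩
      have key : ∀ i, 0 ≤ (inner ℝ ((2:ℝ) • p - s) (yhat i) : ℝ) := by
        intro i
        rw [inner_sub_left, real_inner_smul_left]
        have h1 : (inner ℝ (s - p) (yhat i) : ℝ) ≤ 0 := hpadd _ (fun j => hG j i)
        rw [inner_sub_left] at h1
        have h2 := hpK i
        rw [real_inner_comm] at h2
        linarith [real_inner_comm s (yhat i), real_inner_comm p (yhat i)]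
      rw [hx, inner_sum]
      apply Finset.sum_nonneg
      intro i _
      rw [real_inner_smul_right]
      exact mul_nonneg (hα i) (key i)
    · intro i
      have h1 : (inner ℝ (s - p) (yhat i) : ℝ) ≤ 0 := hpadd _ (fun j => hG j i)
      rw [inner_sub_left] at h1
      have h2 := hpK i
      rw [inner_sub_right, real_inner_smul_right, abs_le]
      constructor
      · linarith [real_inner_comm s (yhat i), real_inner_comm p (yhat i)]
      · linarith [real_inner_comm s (yhat i), real_inner_comm p (yhat i)]
  refine ⟨part1, ?_⟩
  intro v hvF hpar
  subst hF
  obtain ⟨s, hsV, hs1, hv⟩ := hvF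
  have hvnn : ∀ i, 0 ≤ v i := fun i => by rw [hv i]; positivity
  refine ⟨hvnn, ?_⟩
  obtain ⟨s', hs'1, hs'dual, hs'ge⟩ := part1 s hsV hs1
  set V := Submodule.span ℝ (Set.range yhat) with hVdef
  set t := (V.orthogonalProjectionOnto s' : EuclideanSpace ℝ (Fin n)) with ht
  have hyV : ∀ i, yhat i ∈ V := fun i => Submodule.subset_span ⟨i, rfl⟩
  have htV : t ∈ V := (V.orthogonalProjectionOnto s').2
  have horth : ∀ w ∈ V, (inner ℝ (s' - t) w : ℝ) = 0 :=
    fun w hw => V.starProjection_inner_eq_zero s' w hw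
  have hwt : ∀ i, (inner ℝ (yhat i) t : ℝ) = inner ℝ (yhat i) s' := by
    intro i
    have h := horth (yhat i) (hyV i)
    rw [inner_sub_left] at h
    have c1 := real_inner_comm (yhat i) t
    have c2 := real_inner_comm (yhat i) s'
    linarith
  have hpyth : ‖s'‖^2 = ‖t‖^2 + ‖s' - t‖^2 := by
    have hdec : s' = t + (s' - t) := by abel
    have h0 : (inner ℝ t (s' - t) : ℝ) = 0 := by
      rw [real_inner_comm]; exact horth t htV
    calc ‖s'‖^2 = ‖t + (s' - t)‖^2 := by rw [← hdec]
      _ = ‖t‖^2 + 2 * (inner ℝ t (s' - t) : ℝ) + ‖s' - t‖^2 := norm_add_sq_real t (s' - t)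
      _ = ‖t‖^2 + ‖s' - t‖^2 := by rw [h0]; ring
  have hwnn : ∀ i, 0 ≤ (inner ℝ (yhat i) s' : ℝ) :=
    fun i => le_trans (abs_nonneg _) (hs'ge i)
  have hex : ∃ i, (inner ℝ (yhat i) s' : ℝ) ≠ 0 := by
    by_contra h
    push_neg at h
    have hsz : ∀ i, (inner ℝ (yhat i) s : ℝ) = 0 := by
      intro i
      have := hs'ge i
      rw [h i] at this
      exact abs_eq_zero.1 (le_antisymm this (abs_nonneg _))
    obtain ⟨c, hc⟩ := (Submodule.mem_span_range_iff_exists_fun ℝ).1 hsV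
    have hss : (inner ℝ s s : ℝ) = 0 := by
      conv_lhs => rw [← hc]
      rw [sum_inner]
      apply Finset.sum_eq_zero
      intro i _
      rw [real_inner_smul_left, hc, hsz i, mul_zero]
    have : s = 0 := inner_self_eq_zero.1 hss
    rw [this, norm_zero] at hs1
    norm_num at hs1
  have htne : t ≠ 0 := by
    intro h
    obtain ⟨i, hi⟩ := hex
    exact hi (by rw [← hwt i, h, inner_zero_right])
  have htpos : 0 < ‖t‖ := norm_pos_iff.2 htne
  have htle : ‖t‖ ≤ 1 := by nlinarith [sq_nonneg ‖s' - t‖, norm_nonneg t]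
  set u : EuclideanSpace ℝ (Fin n) := ‖t‖⁻¹ • t with hu
  have huV : u ∈ V := V.smul_mem _ htV
  have hu1 : ‖u‖ = 1 := by
    rw [hu, norm_smul, Real.norm_eq_abs, abs_inv, abs_of_nonneg (norm_nonneg t),
      inv_mul_cancel₀ htpos.ne']
  have hinneru : ∀ i, (inner ℝ (yhat i) u : ℝ) = ‖t‖⁻¹ * (inner ℝ (yhat i) s' : ℝ) := by
    intro i
    rw [hu, real_inner_smul_right, hwt i]
  have hinv1 : (1:ℝ) ≤ ‖t‖⁻¹ := by
    rw [le_inv_comm₀ one_pos htpos] ; simpa using htle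
  have hle : ∀ i, v i ≤ (inner ℝ (yhat i) u : ℝ)^2 := by
    intro i
    rw [hinneru i, hv i]
    have h1 : (inner ℝ (yhat i) s : ℝ)^2 ≤ (inner ℝ (yhat i) s' : ℝ)^2 := by
      rw [← sq_abs]
      exact pow_le_pow_left₀ (abs_nonneg _) (hs'ge i) 2
    have hinvsq : (1:ℝ) ≤ ‖t‖⁻¹^2 := by nlinarith
    calc (inner ℝ (yhat i) s : ℝ)^2 ≤ (inner ℝ (yhat i) s' : ℝ)^2 := h1
      _ ≤ ‖t‖⁻¹^2 * (inner ℝ (yhat i) s' : ℝ)^2 := by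
          nlinarith [sq_nonneg (inner ℝ (yhat i) s' : ℝ)]
      _ = (‖t‖⁻¹ * (inner ℝ (yhat i) s' : ℝ))^2 := by ring
  have hv'F : (fun i => (inner ℝ (yhat i) u : ℝ)^2) ∈
      {v : Fin k → ℝ | ∃ s : EuclideanSpace ℝ (Fin n),
        s ∈ Submodule.span ℝ (Set.range yhat) ∧ ‖s‖ = 1 ∧
        ∀ i, v i = (inner ℝ (yhat i) s : ℝ) ^ 2} :=
    ⟨u, huV, hu1, fun i => rfl⟩
  have hveq : (fun i => (inner ℝ (yhat i) u : ℝ)^2) = v := by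
    by_contra hne
    exact hpar ⟨_, hv'F, hle, hne⟩
  have hveq' : ∀ i, v i = (‖t‖⁻¹ * (inner ℝ (yhat i) s' : ℝ))^2 := by
    intro i
    rw [← congrFun hveq i, hinneru i]
  obtain ⟨i0, hi0⟩ := hex
  have hw2pos : (0:ℝ) < (inner ℝ (yhat i0) s' : ℝ)^2 :=
    (sq_nonneg _).lt_of_ne (Ne.symm (pow_ne_zero 2 hi0))
  have h2 : v i0 ≤ (inner ℝ (yhat i0) s' : ℝ)^2 := by
    rw [hv i0, ← sq_abs]
    exact pow_le_pow_left₀ (abs_nonneg _) (hs'ge i0) 2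
  have key : (‖t‖⁻¹ * (inner ℝ (yhat i0) s' : ℝ))^2 ≤ (inner ℝ (yhat i0) s' : ℝ)^2 := by
    rw [← hveq' i0]; exact h2
  have hsqle : ‖t‖⁻¹^2 ≤ 1 := by
    rw [mul_pow] at key
    have := le_of_mul_le_mul_right (by linarith [key] :
      ‖t‖⁻¹^2 * (inner ℝ (yhat i0) s' : ℝ)^2 ≤ 1 * (inner ℝ (yhat i0) s' : ℝ)^2) hw2pos
    exact this
  have hinvle : ‖t‖⁻¹ ≤ 1 := by
    nlinarith [inv_nonneg.2 (norm_nonneg t), sq_nonneg (‖t‖⁻¹ - 1)]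
  have h1t : (1:ℝ) ≤ ‖t‖ := by
    have := mul_le_mul_of_nonneg_right hinvle (norm_nonneg t)
    rwa [inv_mul_cancel₀ htpos.ne', one_mul] at this
  have htn1 : ‖t‖ = 1 := le_antisymm htle h1t
  have hinveq : ‖t‖⁻¹ = 1 := by rw [htn1]; norm_num
  have hvw : ∀ i, v i = (inner ℝ (yhat i) s' : ℝ)^2 := by
    intro i
    rw [hveq' i, hinveq, one_mul]
  have hsqrt : ∀ i, Real.sqrt (v i) = (inner ℝ (yhat i) s' : ℝ) := by
    intro i
    rw [hvw i, Real.sqrt_sq (hwnn i)]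
  have hst : s' = t := by
    have e1 : ‖s'‖^2 = 1 := by rw [hs'1]; norm_num
    have e2 : ‖t‖^2 = 1 := by rw [htn1]; norm_num
    have hz : ‖s' - t‖^2 = 0 := by linarith
    have : ‖s' - t‖ = 0 := by
      have := sq_eq_zero_iff.1 hz
      exact this
    rw [norm_eq_zero, sub_eq_zero] at this
    exact this
  have hs'V : s' ∈ V := hst ▸ htV
  obtain ⟨c, hc⟩ := (Submodule.mem_span_range_iff_exists_fun ℝ).1 hs'V
  set G : Matrix (Fin k) (Fin k) ℝ :=
    Matrix.of fun i j => (inner ℝ (yhat i) (yhat j) : ℝ) with hGdef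
  have hmul : ∀ (d : Fin k → ℝ) i,
      (G *ᵥ d) i = (inner ℝ (yhat i) (∑ j, d j • yhat j) : ℝ) := by
    intro d i
    rw [inner_sum]
    simp only [real_inner_smul_right]
    rw [Matrix.mulVec, dotProduct]
    exact Finset.sum_congr rfl fun j _ => mul_comm _ _
  have hGpd : G.PosDef := by
    rw [Matrix.posDef_iff_dotProduct_mulVec]
    constructor
    · ext i j
      simp only [hGdef, Matrix.conjTranspose_apply, Matrix.of_apply, star_trivial]
      exact real_inner_comm _ _
    · intro x hx
      have hz : (∑ i, x i • yhat i) ≠ 0 := by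
        intro h
        exact hx (funext (Fintype.linearIndependent_iff.1 hli x h))
      have hpos : (0:ℝ) < inner ℝ (∑ i, x i • yhat i) (∑ j, x j • yhat j) := by
        rw [real_inner_self_eq_norm_sq]
        exact pow_pos (norm_pos_iff.2 hz) 2
      have : (star x) ⬝ᵥ (G *ᵥ x) =
          (inner ℝ (∑ i, x i • yhat i) (∑ j, x j • yhat j) : ℝ) := by
        rw [sum_inner, dotProduct]
        exact Finset.sum_congr rfl fun i _ => by
          rw [star_trivial, hmul x i, real_inner_smul_left]
      rw [this]
      exact hpos
  have hdet : IsUnit G.det := (Matrix.isUnit_iff_isUnit_det G).1 hGpd.isUnit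
  have hGinv : G⁻¹ * G = 1 := Matrix.nonsing_inv_mul G hdet
  have hsqrtG : (fun i => Real.sqrt (v i)) = G *ᵥ c := by
    funext i
    rw [hsqrt i, hmul c i, hc]
  rw [hsqrtG]
  show (G *ᵥ c) ⬝ᵥ (G⁻¹ *ᵥ (G *ᵥ c)) = 1
  rw [Matrix.mulVec_mulVec, hGinv, Matrix.one_mulVec]
  have : (G *ᵥ c) ⬝ᵥ c = (inner ℝ s' s' : ℝ) := by
    rw [dotProduct]
    conv_rhs => rw [← hc]
    rw [sum_inner]
    refine Finset.sum_congr rfl fun i _ => ?_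
    rw [hmul c i, hc, real_inner_smul_left]
    ring
  rw [this, real_inner_self_eq_norm_sq, hs'1]
  norm_num
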